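/- Let f = (f_{i₁…i_k}) be a rank k symmetric Schwartz tensor field on ℝⁿ and define (J^{m,k}f)(x,ξ) = ∫_{−∞}^{∞} t^m f_{i₁…i_k}(x+tξ) ξ^{i₁}⋯ξ^{i_k} dt. Then for any k+1 John operators, J_{i₁j₁}⋯J_{i_{k+1}j_{k+1}}(J^{m,k}f) = 0 for all indices 1 ≤ i₁,j₁,…,i_{k+1},j_{k+1} ≤ n. -/

import Mathlib

/-- Partial derivative in the `i`-th `x`-direction for functions of `(x,ξ) ∈ ℝⁿ×ℝⁿ`. -/
noncomputable def pdx (n : ℕ) (i : Fin n) (ψ : (Fin n → ℝ) × (Fin n → ℝ) → ℝ) :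
    (Fin n → ℝ) × (Fin n → ℝ) → ℝ :=
  fun p => fderiv ℝ ψ p (Pi.single i 1, 0)

/-- Partial derivative in the `i`-th `ξ`-direction. -/
noncomputable def pdxi (n : ℕ) (i : Fin n) (ψ : (Fin n → ℝ) × (Fin n → ℝ) → ℝ) :
    (Fin n → ℝ) × (Fin n → ℝ) → ℝ :=
  fun p => fderiv ℝ ψ p (0, Pi.single i 1)

/-- The operator `⟨ξ,∂ₓ⟩ = Σ_p ξ^p ∂/∂x^p`. -/
noncomputable def Dx (n : ℕ) (ψ : (Fin n → ℝ) × (Fin n → ℝ) → ℝ) :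
    (Fin n → ℝ) × (Fin n → ℝ) → ℝ :=
  fun p => ∑ q : Fin n, p.2 q * pdx n q ψ p

/-- Mixed iterated derivative `∂^k/∂x^{j₁}…∂x^{j_q}∂ξ^{j_{q+1}}…∂ξ^{j_k}` along the
multi-index `I`: the first `q` slots are `x`-derivatives, the rest `ξ`-derivatives. -/
noncomputable def mixedD (n k : ℕ) (q : ℕ) (I : Fin k → Fin n)
    (ψ : (Fin n → ℝ) × (Fin n → ℝ) → ℝ) : (Fin n → ℝ) × (Fin n → ℝ) → ℝ :=
  (List.finRange k).foldr
    (fun (a : Fin k) acc => if (a : ℕ) < q then pdx n (I a) acc else pdxi n (I a) acc) ψ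

/-- Symmetrization (averaging over permutations) of a tensor-indexed family of functions. -/
noncomputable def symAvg (n k : ℕ)
    (T : (Fin k → Fin n) → (Fin n → ℝ) × (Fin n → ℝ) → ℝ) (I : Fin k → Fin n) :
    (Fin n → ℝ) × (Fin n → ℝ) → ℝ :=
  fun p => ((Nat.factorial k : ℝ))⁻¹ * ∑ π : Equiv.Perm (Fin k), T (I ∘ π) p

/-- The John operator `J_{ij} = ∂²/∂x^i∂ξ^j − ∂²/∂x^j∂ξ^i`. -/
noncomputable def john (n : ℕ) (i j : Fin n) (ψ : (Fin n → ℝ) × (Fin n → ℝ) → ℝ) :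
    (Fin n → ℝ) × (Fin n → ℝ) → ℝ :=
  fun p => pdx n i (pdxi n j ψ) p - pdx n j (pdxi n i ψ) p

/-- Iterated John operators `J_{i₁j₁}⋯J_{i_rj_r}`. -/
noncomputable def iterJohn (n r : ℕ) (I J : Fin r → Fin n)
    (ψ : (Fin n → ℝ) × (Fin n → ℝ) → ℝ) : (Fin n → ℝ) × (Fin n → ℝ) → ℝ :=
  (List.finRange r).foldr (fun a acc => john n (I a) (J a) acc) ψ

open MeasureTheory

/-- `(J^{m,k} f)(x,ξ) = ∫ t^m ⟨f(x+tξ), ξ^k⟩ dt` for a rank-`k` tensor field `f`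
given by its component functions. -/
noncomputable def JmomT (n m k : ℕ) (f : (Fin k → Fin n) → (Fin n → ℝ) → ℝ) :
    (Fin n → ℝ) × (Fin n → ℝ) → ℝ :=
  fun p => ∫ t : ℝ, t ^ m *
    ∑ I : Fin k → Fin n, f I (p.1 + t • p.2) * ∏ a : Fin k, p.2 (I a)

namespace Stmt6Aux

open MeasureTheory Metric Finset

abbrev HH (n : ℕ) := (Fin n → ℝ) × (Fin n → ℝ)

noncomputable def Aint (n m : ℕ) (φ : SchwartzMap (Fin n → ℝ) ℝ) (p : HH n) : ℝ :=
  ∫ t : ℝ, t ^ m * φ (p.1 + t • p.2)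

noncomputable def lmap (n : ℕ) (t : ℝ) : HH n →L[ℝ] (Fin n → ℝ) :=
  ContinuousLinearMap.fst ℝ _ _ + t • ContinuousLinearMap.snd ℝ _ _

variable {n : ℕ}

lemma lmap_apply (t : ℝ) (q : HH n) : lmap n t q = q.1 + t • q.2 := rfl

lemma norm_lmap_le (t : ℝ) : ‖lmap n t‖ ≤ 1 + |t| := by
  refine ContinuousLinearMap.opNorm_le_bound _ (by positivity) fun q => ?_
  rw [lmap_apply]
  calc ‖q.1 + t • q.2‖ ≤ ‖q.1‖ + ‖t • q.2‖ := norm_add_le _ _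
    _ ≤ ‖q‖ + |t| * ‖q‖ := by
        have h1 : ‖q.1‖ ≤ ‖q‖ := norm_fst_le q
        have h2 : ‖t • q.2‖ = |t| * ‖q.2‖ := by rw [norm_smul, Real.norm_eq_abs]
        have h3 : ‖q.2‖ ≤ ‖q‖ := norm_snd_le q
        have h4 : |t| * ‖q.2‖ ≤ |t| * ‖q‖ := mul_le_mul_of_nonneg_left h3 (abs_nonneg t)
        linarith
    _ = (1 + |t|) * ‖q‖ := by ring

lemma line_bound (p : HH n) (hp : p.2 ≠ 0) :
    ∃ c : ℝ, 0 < c ∧ ∀ q ∈ ball p (‖p.2‖ / 2), ∀ t : ℝ,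
      c * (1 + |t|) ≤ 1 + ‖q.1 + t • q.2‖ := by
  have hξ0 : 0 < ‖p.2‖ := norm_pos_iff.mpr hp
  set δ := ‖p.2‖ / 2 with hδdef
  have hδ : 0 < δ := by positivity
  set R := ‖p.1‖ + δ with hRdef
  have hR : 0 ≤ R := by positivity
  refine ⟨δ / (1 + R + δ), by positivity, fun q hq t => ?_⟩
  have hd := mem_ball.mp hq
  rw [Prod.dist_eq] at hd
  have h1 : dist q.1 p.1 < δ := lt_of_le_of_lt (le_max_left _ _) hd
  have h2 : dist q.2 p.2 < δ := lt_of_le_of_lt (le_max_right _ _) hd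
  have hq2 : δ ≤ ‖q.2‖ := by
    have h3 := abs_norm_sub_norm_le q.2 p.2
    rw [← dist_eq_norm] at h3
    have h4 := (abs_le.mp h3).1
    have : ‖p.2‖ = 2 * δ := by rw [hδdef]; ring
    linarith
  have hq1 : ‖q.1‖ ≤ R := by
    have h3 := abs_norm_sub_norm_le q.1 p.1
    rw [← dist_eq_norm] at h3
    have h4 := (abs_le.mp h3).2
    linarith
  have hN : δ * |t| - R ≤ ‖q.1 + t • q.2‖ := by
    have h4 : ‖t • q.2‖ - ‖q.1‖ ≤ ‖q.1 + t • q.2‖ := by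
      have h5 : ‖t • q.2‖ ≤ ‖q.1 + t • q.2‖ + ‖q.1‖ := by
        calc ‖t • q.2‖ = ‖(q.1 + t • q.2) - q.1‖ := by congr 1; abel
          _ ≤ ‖q.1 + t • q.2‖ + ‖q.1‖ := norm_sub_le _ _
      linarith
    have h5 : δ * |t| ≤ ‖t • q.2‖ := by
      rw [norm_smul, Real.norm_eq_abs]
      have := mul_le_mul_of_nonneg_left hq2 (abs_nonneg t)
      nlinarith [abs_nonneg t]
    linarith
  have hNn : (0:ℝ) ≤ ‖q.1 + t • q.2‖ := norm_nonneg _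
  rw [div_mul_eq_mul_div, div_le_iff₀ (by positivity)]
  nlinarith [abs_nonneg t, mul_nonneg hNn hR, mul_nonneg hNn hδ.le]

lemma decay_fderiv (φ : SchwartzMap (Fin n → ℝ) ℝ) (k : ℕ) :
    ∃ M : ℝ, 0 ≤ M ∧ ∀ y, (1 + ‖y‖) ^ k * ‖fderiv ℝ (⇑φ) y‖ ≤ M := by
  have hM : ∀ y, (1 + ‖y‖) ^ k * ‖iteratedFDeriv ℝ 0 (⇑(SchwartzMap.fderivCLM ℝ (Fin n → ℝ) ℝ φ)) y‖ ≤
      2 ^ k * ((Finset.Iic ((k, 0) : ℕ × ℕ)).sup fun m' => SchwartzMap.seminorm ℝ m'.1 m'.2)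
        (SchwartzMap.fderivCLM ℝ (Fin n → ℝ) ℝ φ) :=
    fun y => SchwartzMap.one_add_le_sup_seminorm_apply (m := ((k, 0) : ℕ × ℕ)) le_rfl le_rfl _ y
  set B := 2 ^ k * ((Finset.Iic ((k, 0) : ℕ × ℕ)).sup fun m' => SchwartzMap.seminorm ℝ m'.1 m'.2)
        (SchwartzMap.fderivCLM ℝ (Fin n → ℝ) ℝ φ) with hB
  refine ⟨max B 0, le_max_right _ _, fun y => le_trans ?_ (le_max_left _ _)⟩
  have := hM y
  rwa [norm_iteratedFDeriv_zero, SchwartzMap.fderivCLM_apply] at this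

lemma decay_val (φ : SchwartzMap (Fin n → ℝ) ℝ) (k : ℕ) :
    ∃ M : ℝ, 0 ≤ M ∧ ∀ y, (1 + ‖y‖) ^ k * ‖φ y‖ ≤ M := by
  have hM : ∀ y, (1 + ‖y‖) ^ k * ‖iteratedFDeriv ℝ 0 (⇑φ) y‖ ≤
      2 ^ k * ((Finset.Iic ((k, 0) : ℕ × ℕ)).sup fun m' => SchwartzMap.seminorm ℝ m'.1 m'.2) φ :=
    fun y => SchwartzMap.one_add_le_sup_seminorm_apply (m := ((k, 0) : ℕ × ℕ)) le_rfl le_rfl _ y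
  set B := 2 ^ k * ((Finset.Iic ((k, 0) : ℕ × ℕ)).sup fun m' => SchwartzMap.seminorm ℝ m'.1 m'.2) φ with hB
  refine ⟨max B 0, le_max_right _ _, fun y => le_trans ?_ (le_max_left _ _)⟩
  have := hM y
  rwa [norm_iteratedFDeriv_zero] at this

lemma line_decay (m : ℕ) (g : (Fin n → ℝ) → ℝ) (M : ℝ) (hg0 : ∀ y, 0 ≤ g y)
    (hgd : ∀ y, (1 + ‖y‖) ^ (m + 3) * g y ≤ M) (p : HH n) (hp : p.2 ≠ 0) :
    ∃ M', ∀ q ∈ ball p (‖p.2‖ / 2), ∀ t : ℝ,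
      |t| ^ m * (1 + |t|) * g (q.1 + t • q.2) ≤ M' * ((1 + |t|) ^ 2)⁻¹ := by
  obtain ⟨c, hc, hcb⟩ := line_bound p hp
  refine ⟨M / c ^ (m + 3), fun q hq t => ?_⟩
  have hs1 : (1:ℝ) ≤ 1 + |t| := le_add_of_nonneg_right (abs_nonneg t)
  have hs0 : (0:ℝ) < 1 + |t| := lt_of_lt_of_le one_pos hs1
  set s := 1 + |t| with hs
  set y := q.1 + t • q.2 with hy
  have h1 : c * s ≤ 1 + ‖y‖ := hcb q hq t
  have key : s ^ (m + 3) * g y ≤ M / c ^ (m + 3) := by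
    rw [le_div_iff₀ (by positivity)]
    calc s ^ (m + 3) * g y * c ^ (m + 3) = (c * s) ^ (m + 3) * g y := by
          rw [mul_pow]; ring
      _ ≤ (1 + ‖y‖) ^ (m + 3) * g y :=
          mul_le_mul_of_nonneg_right (pow_le_pow_left₀ (by positivity) h1 _) (hg0 y)
      _ ≤ M := hgd y
  have h2 : |t| ^ m * s * g y ≤ s ^ (m + 3) * g y * ((s ^ 2)⁻¹) := by
    have e1 : s ^ (m + 3) * (s ^ 2)⁻¹ = s ^ (m + 1) := by
      rw [pow_add, pow_add]
      field_simp
    calc |t| ^ m * s * g y ≤ s ^ m * s * g y := by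
          have h6 := pow_le_pow_left₀ (abs_nonneg t) (by linarith : |t| ≤ s) m
          nlinarith [mul_nonneg (mul_nonneg (sub_nonneg.mpr h6) hs0.le) (hg0 y)]
      _ = s ^ (m + 1) * g y := by rw [pow_succ]
      _ = s ^ (m + 3) * (s ^ 2)⁻¹ * g y := by rw [e1]
      _ = s ^ (m + 3) * g y * (s ^ 2)⁻¹ := by ring
  calc |t| ^ m * s * g y ≤ s ^ (m + 3) * g y * ((s ^ 2)⁻¹) := h2
    _ ≤ M / c ^ (m + 3) * ((s ^ 2)⁻¹) := mul_le_mul_of_nonneg_right key (by positivity)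

lemma integ_aux : Integrable (fun t : ℝ => ((1 + |t|) ^ 2)⁻¹) := by
  have h := integrable_one_add_norm (E := ℝ) (μ := volume) (r := 2)
    (by rw [Module.finrank_self]; norm_num)
  refine h.congr (Filter.Eventually.of_forall fun t => ?_)
  show (1 + ‖t‖) ^ (-2 : ℝ) = ((1 + |t|) ^ 2)⁻¹
  rw [Real.norm_eq_abs]
  rw [show ((-2 : ℝ) = -((2:ℕ):ℝ)) by norm_num, Real.rpow_neg (by positivity),
    Real.rpow_natCast]

noncomputable def AD (n m : ℕ) (φ : SchwartzMap (Fin n → ℝ) ℝ) (q : HH n) : HH n →L[ℝ] ℝ :=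
  ∫ t : ℝ, t ^ m • ((fderiv ℝ (⇑φ) (q.1 + t • q.2)).comp (lmap n t))

variable {n : ℕ}

lemma cont_aux (q : HH n) : Continuous fun t : ℝ => q.1 + t • q.2 :=
  continuous_const.add (continuous_id.smul continuous_const)

lemma cont_line (m : ℕ) (φ : SchwartzMap (Fin n → ℝ) ℝ) (q : HH n) :
    Continuous fun t : ℝ => t ^ m * φ (q.1 + t • q.2) :=
  (continuous_pow m).mul (φ.continuous.comp (cont_aux q))

lemma cont_AD (m : ℕ) (φ : SchwartzMap (Fin n → ℝ) ℝ) (q : HH n) :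
    Continuous fun t : ℝ => t ^ m • ((fderiv ℝ (⇑φ) (q.1 + t • q.2)).comp (lmap n t)) := by
  have h2 : Continuous (fderiv ℝ (⇑φ)) := (φ.smooth ⊤).continuous_fderiv (by simp)
  have h3 : Continuous fun t : ℝ => lmap n t := by
    unfold lmap
    exact continuous_const.add (continuous_id.smul continuous_const)
  exact (continuous_pow m).smul ((h2.comp (cont_aux q)).clm_comp h3)

lemma integ_line (m : ℕ) (φ : SchwartzMap (Fin n → ℝ) ℝ) (q : HH n) (hq : q.2 ≠ 0) :
    Integrable fun t : ℝ => t ^ m * φ (q.1 + t • q.2) := by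
  obtain ⟨M, hM0, hMd⟩ := decay_val φ (m + 3)
  obtain ⟨M', hM'⟩ := line_decay m (fun y => ‖φ y‖) M (fun y => norm_nonneg _) hMd q hq
  have hq0 : 0 < ‖q.2‖ := norm_pos_iff.mpr hq
  have hball : q ∈ ball q (‖q.2‖ / 2) := mem_ball_self (by positivity)
  refine (integ_aux.const_mul M').mono' (cont_line m φ q).aestronglyMeasurable
    (Filter.Eventually.of_forall fun t => ?_)
  rw [norm_mul, norm_pow, Real.norm_eq_abs]
  have hb := hM' q hball t
  have h1 : |t| ^ m * ‖φ (q.1 + t • q.2)‖ ≤ |t| ^ m * (1 + |t|) * ‖φ (q.1 + t • q.2)‖ := by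
    nlinarith [norm_nonneg (φ (q.1 + t • q.2)), abs_nonneg t, pow_nonneg (abs_nonneg t) m,
      mul_nonneg (pow_nonneg (abs_nonneg t) m) (norm_nonneg (φ (q.1 + t • q.2)))]
  calc |t| ^ m * ‖φ (q.1 + t • q.2)‖ ≤ |t| ^ m * (1 + |t|) * ‖φ (q.1 + t • q.2)‖ := h1
    _ ≤ M' * ((1 + |t|) ^ 2)⁻¹ := hb

lemma norm_ADterm_le (m : ℕ) (φ : SchwartzMap (Fin n → ℝ) ℝ) (q : HH n) (t : ℝ) :
    ‖t ^ m • ((fderiv ℝ (⇑φ) (q.1 + t • q.2)).comp (lmap n t))‖ ≤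
      |t| ^ m * (1 + |t|) * ‖fderiv ℝ (⇑φ) (q.1 + t • q.2)‖ := by
  have e0 : ‖t ^ m • ((fderiv ℝ (⇑φ) (q.1 + t • q.2)).comp (lmap n t))‖
      = |t| ^ m * ‖(fderiv ℝ (⇑φ) (q.1 + t • q.2)).comp (lmap n t)‖ := by
    rw [norm_smul (t ^ m) ((fderiv ℝ (⇑φ) (q.1 + t • q.2)).comp (lmap n t)),
      Real.norm_eq_abs, abs_pow]
  rw [e0]
  have h1 : ‖(fderiv ℝ (⇑φ) (q.1 + t • q.2)).comp (lmap n t)‖ ≤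
      ‖fderiv ℝ (⇑φ) (q.1 + t • q.2)‖ * (1 + |t|) :=
    le_trans (ContinuousLinearMap.opNorm_comp_le _ _)
      (mul_le_mul_of_nonneg_left (norm_lmap_le t) (norm_nonneg _))
  have h2 : (0:ℝ) ≤ |t| ^ m := pow_nonneg (abs_nonneg t) m
  calc |t| ^ m * ‖(fderiv ℝ (⇑φ) (q.1 + t • q.2)).comp (lmap n t)‖
      ≤ |t| ^ m * (‖fderiv ℝ (⇑φ) (q.1 + t • q.2)‖ * (1 + |t|)) :=
        mul_le_mul_of_nonneg_left h1 h2
    _ = |t| ^ m * (1 + |t|) * ‖fderiv ℝ (⇑φ) (q.1 + t • q.2)‖ := by ring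

lemma integ_AD (m : ℕ) (φ : SchwartzMap (Fin n → ℝ) ℝ) (q : HH n) (hq : q.2 ≠ 0) :
    Integrable fun t : ℝ => t ^ m • ((fderiv ℝ (⇑φ) (q.1 + t • q.2)).comp (lmap n t)) := by
  obtain ⟨M, hM0, hMd⟩ := decay_fderiv φ (m + 3)
  obtain ⟨M', hM'⟩ := line_decay m (fun y => ‖fderiv ℝ (⇑φ) y‖) M (fun y => norm_nonneg _) hMd q hq
  have hq0 : 0 < ‖q.2‖ := norm_pos_iff.mpr hq
  have hball : q ∈ ball q (‖q.2‖ / 2) := mem_ball_self (by positivity)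
  refine (integ_aux.const_mul M').mono' (cont_AD m φ q).aestronglyMeasurable
    (Filter.Eventually.of_forall fun t => ?_)
  exact le_trans (norm_ADterm_le m φ q t) (hM' q hball t)

lemma hasFDerivAt_Aint (m : ℕ) (φ : SchwartzMap (Fin n → ℝ) ℝ) (p : HH n) (hp : p.2 ≠ 0) :
    HasFDerivAt (Aint n m φ) (AD n m φ p) p := by
  obtain ⟨M, hM0, hMd⟩ := decay_fderiv φ (m + 3)
  obtain ⟨M', hM'⟩ := line_decay m (fun y => ‖fderiv ℝ (⇑φ) y‖) M (fun y => norm_nonneg _) hMd p hp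
  have hp0 : 0 < ‖p.2‖ := norm_pos_iff.mpr hp
  have hε : 0 < ‖p.2‖ / 2 := by positivity
  exact hasFDerivAt_integral_of_dominated_of_fderiv_le (𝕜 := ℝ)
    (F := fun (q : HH n) (t : ℝ) => t ^ m * φ (q.1 + t • q.2))
    (F' := fun (q : HH n) (t : ℝ) => t ^ m • ((fderiv ℝ (⇑φ) (q.1 + t • q.2)).comp (lmap n t)))
    (bound := fun t => M' * ((1 + |t|) ^ 2)⁻¹) (ball_mem_nhds p hε)
    (Filter.Eventually.of_forall fun q => (cont_line m φ q).aestronglyMeasurable)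
    (integ_line m φ p hp)
    (cont_AD m φ p).aestronglyMeasurable
    (Filter.Eventually.of_forall fun t q hqball =>
      le_trans (norm_ADterm_le m φ q t) (hM' q hqball t))
    (integ_aux.const_mul M')
    (Filter.Eventually.of_forall fun t q _ => by
      have h1 : HasFDerivAt (fun q : HH n => q.1 + t • q.2) (lmap n t) q := (lmap n t).hasFDerivAt
      have h2 : HasFDerivAt (⇑φ) (fderiv ℝ (⇑φ) (q.1 + t • q.2)) (q.1 + t • q.2) :=
        (φ.differentiable (q.1 + t • q.2)).hasFDerivAt
      exact (h2.comp q h1).const_mul (t ^ m))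

lemma diff_Aint (m : ℕ) (φ : SchwartzMap (Fin n → ℝ) ℝ) (p : HH n) (hp : p.2 ≠ 0) :
    DifferentiableAt ℝ (Aint n m φ) p := (hasFDerivAt_Aint m φ p hp).differentiableAt

noncomputable def SchwartzMap.pderivCLM (_𝕜 : Type) (m : Fin n → ℝ) :
    SchwartzMap (Fin n → ℝ) ℝ →L[ℝ] SchwartzMap (Fin n → ℝ) ℝ :=
  LineDeriv.lineDerivOpCLM ℝ (SchwartzMap (Fin n → ℝ) ℝ) m

theorem SchwartzMap.pderivCLM_apply (_𝕜 : Type) (m : Fin n → ℝ) (f : SchwartzMap (Fin n → ℝ) ℝ)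
    (x : Fin n → ℝ) : SchwartzMap.pderivCLM _𝕜 m f x = fderiv ℝ f x m :=
  SchwartzMap.lineDerivOp_apply_eq_fderiv m f x

noncomputable def pdS (n : ℕ) (i : Fin n) :
    SchwartzMap (Fin n → ℝ) ℝ →L[ℝ] SchwartzMap (Fin n → ℝ) ℝ :=
  SchwartzMap.pderivCLM ℝ (Pi.single i 1)

lemma AD_apply_x (m : ℕ) (φ : SchwartzMap (Fin n → ℝ) ℝ) (p : HH n) (hp : p.2 ≠ 0) (i : Fin n) :
    AD n m φ p ((Pi.single i 1 : Fin n → ℝ), (0 : Fin n → ℝ)) = Aint n m (pdS n i φ) p := by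
  rw [AD, ContinuousLinearMap.integral_apply (integ_AD m φ p hp), Aint]
  congr 1
  funext t
  have : lmap n t ((Pi.single i 1 : Fin n → ℝ), (0 : Fin n → ℝ)) = Pi.single i 1 := by
    rw [lmap_apply]; simp
  simp only [ContinuousLinearMap.smul_apply, ContinuousLinearMap.coe_comp', Function.comp_apply,
    this, smul_eq_mul]
  rw [pdS, SchwartzMap.pderivCLM_apply]

lemma AD_apply_xi (m : ℕ) (φ : SchwartzMap (Fin n → ℝ) ℝ) (p : HH n) (hp : p.2 ≠ 0) (j : Fin n) :
    AD n m φ p ((0 : Fin n → ℝ), (Pi.single j 1 : Fin n → ℝ)) = Aint n (m + 1) (pdS n j φ) p := by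
  rw [AD, ContinuousLinearMap.integral_apply (integ_AD m φ p hp), Aint]
  congr 1
  funext t
  have h1 : lmap n t ((0 : Fin n → ℝ), (Pi.single j 1 : Fin n → ℝ)) = (t • (Pi.single j 1 : Fin n → ℝ) : Fin n → ℝ) := by
    rw [lmap_apply]; simp
  simp only [ContinuousLinearMap.smul_apply, ContinuousLinearMap.coe_comp', Function.comp_apply,
    h1, smul_eq_mul]
  rw [(fderiv ℝ (⇑φ) (p.1 + t • p.2)).map_smul, pdS, SchwartzMap.pderivCLM_apply, pow_succ,
    smul_eq_mul]
  ring
noncomputable def coordCLM (n : ℕ) (r : Fin n) : HH n →L[ℝ] ℝ :=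
  (ContinuousLinearMap.proj r).comp (ContinuousLinearMap.snd ℝ _ _)

def QQ (n k : ℕ) (s : Finset (Fin k)) (I : Fin k → Fin n) (q : HH n) : ℝ :=
  ∏ b ∈ s, q.2 (I b)

noncomputable def PA (n k m : ℕ) (s : Finset (Fin k)) (I : Fin k → Fin n)
    (φ : SchwartzMap (Fin n → ℝ) ℝ) (q : HH n) : ℝ :=
  QQ n k s I q * Aint n m φ q

variable {n : ℕ}

lemma coordCLM_apply (r : Fin n) (q : HH n) : coordCLM n r q = q.2 r := rfl

lemma hasFDerivAt_QQ {k : ℕ} (s : Finset (Fin k)) (I : Fin k → Fin n) (q : HH n) :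
    HasFDerivAt (QQ n k s I)
      (∑ a ∈ s, (∏ b ∈ s.erase a, q.2 (I b)) • coordCLM n (I a)) q := by
  exact HasFDerivAt.finset_prod (u := s) (g := fun b (q : HH n) => q.2 (I b))
    (g' := fun b => coordCLM n (I b)) (fun b _ => (coordCLM n (I b)).hasFDerivAt)

lemma QQderiv_x {k : ℕ} (s : Finset (Fin k)) (I : Fin k → Fin n) (q : HH n) (i : Fin n) :
    (∑ a ∈ s, (∏ b ∈ s.erase a, q.2 (I b)) • coordCLM n (I a))
      ((Pi.single i 1 : Fin n → ℝ), (0 : Fin n → ℝ)) = 0 := by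
  rw [ContinuousLinearMap.sum_apply]
  refine Finset.sum_eq_zero fun a _ => ?_
  rw [ContinuousLinearMap.smul_apply, coordCLM_apply]
  simp

lemma QQderiv_xi {k : ℕ} (s : Finset (Fin k)) (I : Fin k → Fin n) (q : HH n) (j : Fin n) :
    (∑ a ∈ s, (∏ b ∈ s.erase a, q.2 (I b)) • coordCLM n (I a))
      ((0 : Fin n → ℝ), (Pi.single j 1 : Fin n → ℝ)) =
      ∑ a ∈ s, if I a = j then QQ n k (s.erase a) I q else 0 := by
  rw [ContinuousLinearMap.sum_apply]
  refine Finset.sum_congr rfl fun a _ => ?_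
  rw [ContinuousLinearMap.smul_apply, coordCLM_apply]
  have h2 : ((0 : Fin n → ℝ), (Pi.single j 1 : Fin n → ℝ)).2 (I a)
      = if I a = j then (1:ℝ) else 0 := by simp [Pi.single_apply]
  rw [h2, smul_eq_mul, QQ]
  split_ifs <;> simp

lemma hasFDerivAt_PA {k m : ℕ} (s : Finset (Fin k)) (I : Fin k → Fin n)
    (φ : SchwartzMap (Fin n → ℝ) ℝ) (p : HH n) (hp : p.2 ≠ 0) :
    HasFDerivAt (PA n k m s I φ)
      (QQ n k s I p • AD n m φ p +
        Aint n m φ p • (∑ a ∈ s, (∏ b ∈ s.erase a, p.2 (I b)) • coordCLM n (I a))) p :=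
  (hasFDerivAt_QQ s I p).mul (hasFDerivAt_Aint m φ p hp)

lemma diff_PA {k m : ℕ} (s : Finset (Fin k)) (I : Fin k → Fin n)
    (φ : SchwartzMap (Fin n → ℝ) ℝ) (p : HH n) (hp : p.2 ≠ 0) :
    DifferentiableAt ℝ (PA n k m s I φ) p := (hasFDerivAt_PA s I φ p hp).differentiableAt

lemma fderiv_PA_x {k m : ℕ} (s : Finset (Fin k)) (I : Fin k → Fin n)
    (φ : SchwartzMap (Fin n → ℝ) ℝ) (p : HH n) (hp : p.2 ≠ 0) (i : Fin n) :
    fderiv ℝ (PA n k m s I φ) p ((Pi.single i 1 : Fin n → ℝ), (0 : Fin n → ℝ)) =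
      PA n k m s I (pdS n i φ) p := by
  rw [(hasFDerivAt_PA s I φ p hp).fderiv, ContinuousLinearMap.add_apply,
    ContinuousLinearMap.smul_apply, ContinuousLinearMap.smul_apply,
    QQderiv_x, AD_apply_x m φ p hp i]
  simp [PA, smul_eq_mul]

lemma fderiv_PA_xi {k m : ℕ} (s : Finset (Fin k)) (I : Fin k → Fin n)
    (φ : SchwartzMap (Fin n → ℝ) ℝ) (p : HH n) (hp : p.2 ≠ 0) (j : Fin n) :
    fderiv ℝ (PA n k m s I φ) p ((0 : Fin n → ℝ), (Pi.single j 1 : Fin n → ℝ)) =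
      (∑ a ∈ s, if I a = j then PA n k m (s.erase a) I φ p else 0) +
        PA n k (m + 1) s I (pdS n j φ) p := by
  rw [(hasFDerivAt_PA s I φ p hp).fderiv, ContinuousLinearMap.add_apply,
    ContinuousLinearMap.smul_apply, ContinuousLinearMap.smul_apply,
    QQderiv_xi, AD_apply_xi m φ p hp j]
  rw [smul_eq_mul, smul_eq_mul, Finset.mul_sum]
  rw [add_comm]
  congr 1
  refine Finset.sum_congr rfl fun a _ => ?_
  rw [PA]
  split_ifs <;> ring

lemma isOpenU : IsOpen {q : HH n | q.2 ≠ 0} := by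
  have : {q : HH n | q.2 ≠ 0} = Prod.snd ⁻¹' ({0}ᶜ) := rfl
  rw [this]
  exact (isOpen_compl_singleton).preimage continuous_snd

lemma fderiv_congr_U (ψ₁ ψ₂ : HH n → ℝ) (h : ∀ q : HH n, q.2 ≠ 0 → ψ₁ q = ψ₂ q)
    (p : HH n) (hp : p.2 ≠ 0) : fderiv ℝ ψ₁ p = fderiv ℝ ψ₂ p :=
  Filter.EventuallyEq.fderiv_eq
    (Filter.eventuallyEq_of_mem (isOpenU.mem_nhds hp) fun q hq => h q hq)

lemma fderiv_cmul (c : ℝ) (ψ : HH n → ℝ) (p : HH n) :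
    fderiv ℝ (fun q => c * ψ q) p = c • fderiv ℝ ψ p := by
  rcases eq_or_ne c 0 with hc | hc
  · simp [hc]
  · by_cases hd : DifferentiableAt ℝ ψ p
    · exact fderiv_const_mul hd c
    · have hd2 : ¬ DifferentiableAt ℝ (fun q => c * ψ q) p := by
        intro h'
        apply hd
        have := h'.const_mul c⁻¹
        simpa [← mul_assoc, inv_mul_cancel₀ hc] using this
      rw [fderiv_zero_of_not_differentiableAt hd, fderiv_zero_of_not_differentiableAt hd2,
        smul_zero]

lemma fd_sum {ι : Type*} (u : Finset ι) (f : ι → HH n → ℝ) (p : HH n)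
    (hf : ∀ w ∈ u, DifferentiableAt ℝ (f w) p) (v : HH n) :
    fderiv ℝ (fun q => ∑ w ∈ u, f w q) p v = ∑ w ∈ u, fderiv ℝ (f w) p v := by
  rw [fderiv_fun_sum hf, ContinuousLinearMap.sum_apply]

lemma fd_add (ψ₁ ψ₂ : HH n → ℝ) (p : HH n) (h₁ : DifferentiableAt ℝ ψ₁ p)
    (h₂ : DifferentiableAt ℝ ψ₂ p) (v : HH n) :
    fderiv ℝ (fun q => ψ₁ q + ψ₂ q) p v = fderiv ℝ ψ₁ p v + fderiv ℝ ψ₂ p v := by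
  rw [fderiv_fun_add h₁ h₂, ContinuousLinearMap.add_apply]

lemma Jmom_eq (m k : ℕ) (g : (Fin k → Fin n) → SchwartzMap (Fin n → ℝ) ℝ) (p : HH n)
    (hp : p.2 ≠ 0) :
    JmomT n m k (fun I => ⇑(g I)) p = ∑ I : Fin k → Fin n, PA n k m Finset.univ I (g I) p := by
  rw [JmomT]
  have h1 : ∀ t : ℝ, t ^ m * ∑ I : Fin k → Fin n, (g I) (p.1 + t • p.2) * ∏ a, p.2 (I a)
      = ∑ I : Fin k → Fin n, (∏ a, p.2 (I a)) * (t ^ m * (g I) (p.1 + t • p.2)) := by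
    intro t
    rw [Finset.mul_sum]
    exact Finset.sum_congr rfl fun I _ => by ring
  simp only [h1]
  rw [integral_finset_sum _ (fun I _ => ((integ_line m (g I) p hp).const_mul _))]
  exact Finset.sum_congr rfl fun I _ => by rw [integral_const_mul]; rfl

noncomputable def G1 (n m k : ℕ) (g : (Fin k → Fin n) → SchwartzMap (Fin n → ℝ) ℝ)
    (j : Fin n) (q : HH n) : ℝ :=
  (∑ I : Fin k → Fin n, ∑ a : Fin k,
      if I a = j then PA n k m (Finset.univ.erase a) I (g I) q else 0)
  + ∑ I : Fin k → Fin n, PA n k (m + 1) Finset.univ I (pdS n j (g I)) q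

lemma pdxi_Jmom (m k : ℕ) (g : (Fin k → Fin n) → SchwartzMap (Fin n → ℝ) ℝ) (j : Fin n)
    (q : HH n) (hq : q.2 ≠ 0) :
    pdxi n j (JmomT n m k (fun I => ⇑(g I))) q = G1 n m k g j q := by
  rw [pdxi]
  rw [fderiv_congr_U _ (fun q => ∑ I : Fin k → Fin n, PA n k m Finset.univ I (g I) q)
    (fun q hq => Jmom_eq m k g q hq) q hq]
  rw [fd_sum Finset.univ _ q (fun I _ => diff_PA _ _ _ q hq) _]
  rw [G1, ← Finset.sum_add_distrib]
  exact Finset.sum_congr rfl fun I _ => fderiv_PA_xi Finset.univ I (g I) q hq j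

lemma pdx_G1 (m k : ℕ) (g : (Fin k → Fin n) → SchwartzMap (Fin n → ℝ) ℝ) (i j : Fin n)
    (p : HH n) (hp : p.2 ≠ 0) :
    pdx n i (G1 n m k g j) p =
      (∑ I : Fin k → Fin n, ∑ a : Fin k,
        if I a = j then PA n k m (Finset.univ.erase a) I (pdS n i (g I)) p else 0)
      + ∑ I : Fin k → Fin n, PA n k (m + 1) Finset.univ I (pdS n i (pdS n j (g I))) p := by
  have hdite : ∀ (I : Fin k → Fin n) (a : Fin k), DifferentiableAt ℝ
      (fun q => if I a = j then PA n k m (Finset.univ.erase a) I (g I) q else 0) p := by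
    intro I a
    by_cases h : I a = j
    · simpa only [h, if_pos] using diff_PA (Finset.univ.erase a) I (g I) p hp
    · simp only [h, if_false]
      exact differentiableAt_const 0
  have hd1 : DifferentiableAt ℝ (fun q => ∑ I : Fin k → Fin n, ∑ a : Fin k,
      if I a = j then PA n k m (Finset.univ.erase a) I (g I) q else 0) p :=
    DifferentiableAt.fun_sum fun I _ => DifferentiableAt.fun_sum fun a _ => hdite I a
  have hd2 : DifferentiableAt ℝ (fun q => ∑ I : Fin k → Fin n,
      PA n k (m + 1) Finset.univ I (pdS n j (g I)) q) p :=
    DifferentiableAt.fun_sum fun I _ => diff_PA _ _ _ p hp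
  rw [pdx]
  rw [show G1 n m k g j = fun q => (∑ I : Fin k → Fin n, ∑ a : Fin k,
      if I a = j then PA n k m (Finset.univ.erase a) I (g I) q else 0)
      + ∑ I : Fin k → Fin n, PA n k (m + 1) Finset.univ I (pdS n j (g I)) q from rfl]
  rw [fd_add _ _ p hd1 hd2]
  congr 1
  · rw [fd_sum Finset.univ _ p (fun I _ => DifferentiableAt.fun_sum fun a _ => hdite I a) _]
    refine Finset.sum_congr rfl fun I _ => ?_
    rw [fd_sum Finset.univ _ p (fun a _ => hdite I a) _]
    refine Finset.sum_congr rfl fun a _ => ?_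
    by_cases h : I a = j
    · simp only [h, if_pos]
      exact fderiv_PA_x (Finset.univ.erase a) I (g I) p hp i
    · simp only [h, if_false]
      rw [fderiv_fun_const]
      rfl
  · rw [fd_sum Finset.univ _ p (fun I _ => diff_PA _ _ _ p hp) _]
    exact Finset.sum_congr rfl fun I _ => fderiv_PA_x Finset.univ I (pdS n j (g I)) p hp i

lemma pd_comm (i j : Fin n) (φ : SchwartzMap (Fin n → ℝ) ℝ) :
    pdS n i (pdS n j φ) = pdS n j (pdS n i φ) := by
  ext y
  have hsm : ∀ (u : Fin n → ℝ), (⇑(SchwartzMap.pderivCLM ℝ u φ)) =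
      fun z => fderiv ℝ (⇑φ) z u := fun u => funext fun z => SchwartzMap.pderivCLM_apply ℝ u φ z
  simp only [pdS]
  rw [SchwartzMap.pderivCLM_apply, SchwartzMap.pderivCLM_apply, hsm, hsm]
  have hd : DifferentiableAt ℝ (fderiv ℝ (⇑φ)) y :=
    (((φ.smooth ⊤).fderiv_right (m := 1) (by exact WithTop.coe_le_coe.mpr le_top)).differentiable one_ne_zero).differentiableAt
  have h1 : ∀ (u v : Fin n → ℝ), fderiv ℝ (fun z => fderiv ℝ (⇑φ) z u) y v =
      fderiv ℝ (fderiv ℝ (⇑φ)) y v u := by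
    intro u v
    rw [fderiv_clm_apply hd (differentiableAt_const u)]
    simp
  rw [h1, h1]
  exact second_derivative_symmetric (fun z => (φ.differentiable z).hasFDerivAt)
    hd.hasFDerivAt _ _

lemma john_formula (m k : ℕ) (g : (Fin k → Fin n) → SchwartzMap (Fin n → ℝ) ℝ) (i j : Fin n)
    (p : HH n) (hp : p.2 ≠ 0) :
    john n i j (JmomT n m k (fun I => ⇑(g I))) p =
      (∑ I : Fin k → Fin n, ∑ a : Fin k,
        if I a = j then PA n k m (Finset.univ.erase a) I (pdS n i (g I)) p else 0)
      - ∑ I : Fin k → Fin n, ∑ a : Fin k,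
        if I a = i then PA n k m (Finset.univ.erase a) I (pdS n j (g I)) p else 0 := by
  rw [john]
  have e1 : pdx n i (pdxi n j (JmomT n m k (fun I => ⇑(g I)))) p = pdx n i (G1 n m k g j) p := by
    rw [pdx, pdx, fderiv_congr_U _ (G1 n m k g j) (fun q hq => pdxi_Jmom m k g j q hq) p hp]
  have e2 : pdx n j (pdxi n i (JmomT n m k (fun I => ⇑(g I)))) p = pdx n j (G1 n m k g i) p := by
    rw [pdx, pdx, fderiv_congr_U _ (G1 n m k g i) (fun q hq => pdxi_Jmom m k g i q hq) p hp]
  rw [e1, e2, pdx_G1 m k g i j p hp, pdx_G1 m k g j i p hp]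
  have e3 : ∀ I : Fin k → Fin n, PA n k (m + 1) Finset.univ I (pdS n i (pdS n j (g I))) p
      = PA n k (m + 1) Finset.univ I (pdS n j (pdS n i (g I))) p := fun I => by
    rw [pd_comm]
  simp only [e3]
  ring

lemma collapse (k : ℕ) (ξ : Fin n → ℝ) (j : Fin n) (W : (Fin (k + 1) → Fin n) → ℝ)
    (hW : ∀ (I : Fin (k + 1) → Fin n) (π : Equiv.Perm (Fin (k + 1))), W (I ∘ π) = W I) :
    (∑ I : Fin (k + 1) → Fin n, ∑ a : Fin (k + 1),
        if I a = j then (∏ b ∈ Finset.univ.erase a, ξ (I b)) * W I else 0)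
    = ((k : ℝ) + 1) * ∑ I' : Fin k → Fin n, (∏ c, ξ (I' c)) * W (Fin.cons j I') := by
  rw [Finset.sum_comm]
  have h1 : ∀ a : Fin (k + 1),
      (∑ I : Fin (k + 1) → Fin n,
        if I a = j then (∏ b ∈ Finset.univ.erase a, ξ (I b)) * W I else 0)
      = ∑ I' : Fin k → Fin n, (∏ c, ξ (I' c)) * W (Fin.cons j I') := by
    intro a
    rw [← Equiv.sum_comp (Fin.insertNthEquiv (fun _ => Fin n) a)]
    rw [Fintype.sum_prod_type]
    have h2 : ∀ (v : Fin n) (I' : Fin k → Fin n),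
        (Fin.insertNthEquiv (fun _ => Fin n) a) (v, I') = a.insertNth v I' := fun _ _ => rfl
    simp only [h2, Fin.insertNth_apply_same]
    have h3 : ∀ v : Fin n, (∑ I' : Fin k → Fin n, if v = j then
        (∏ b ∈ Finset.univ.erase a, ξ ((a.insertNth v I' : Fin (k+1) → Fin n) b))
          * W (a.insertNth v I' : Fin (k+1) → Fin n) else 0)
        = if v = j then (∑ I' : Fin k → Fin n,
        (∏ b ∈ Finset.univ.erase a, ξ ((a.insertNth v I' : Fin (k+1) → Fin n) b))
          * W (a.insertNth v I' : Fin (k+1) → Fin n)) else 0 := by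
      intro v
      split_ifs <;> simp
    simp only [h3]
    rw [Finset.sum_ite_eq' Finset.univ j]
    simp only [Finset.mem_univ, if_pos]
    refine Finset.sum_congr rfl fun I' _ => ?_
    congr 1
    · refine (Finset.prod_bij (fun (c : Fin k) _ => a.succAbove c) ?_ ?_ ?_ ?_).symm
      · exact fun c _ => Finset.mem_erase.mpr ⟨Fin.succAbove_ne a c, Finset.mem_univ _⟩
      · exact fun c₁ _ c₂ _ h => Fin.succAbove_right_injective h
      · intro b hb
        obtain ⟨z, hz⟩ := Fin.exists_succAbove_eq (Finset.mem_erase.mp hb).1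
        exact ⟨z, Finset.mem_univ z, hz⟩
      · intro c _
        rw [Fin.insertNth_apply_succAbove]
    · have hco : ∀ b, (Fin.insertNth a j I' : Fin (k+1) → Fin n) (a.cycleRange.symm b)
          = (Fin.cons j I' : Fin (k+1) → Fin n) b := by
        intro b
        refine Fin.cases ?_ (fun c => ?_) b
        · rw [Fin.cycleRange_symm_zero, Fin.insertNth_apply_same, Fin.cons_zero]
        · rw [Fin.cycleRange_symm_succ, Fin.insertNth_apply_succAbove, Fin.cons_succ]
      calc W (Fin.insertNth a j I')
          = W (Fin.insertNth a j I' ∘ ⇑(a.cycleRange.symm)) :=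
            (hW (Fin.insertNth a j I') a.cycleRange.symm).symm
        _ = W (Fin.cons j I') := congrArg W (funext fun b => hco b)
  rw [Finset.sum_congr rfl fun a _ => h1 a, Finset.sum_const, Finset.card_univ,
    Fintype.card_fin, nsmul_eq_mul]
  push_cast
  ring

lemma Aint_sub (m : ℕ) (φ₁ φ₂ : SchwartzMap (Fin n → ℝ) ℝ) (p : HH n) (hp : p.2 ≠ 0) :
    Aint n m (φ₁ - φ₂) p = Aint n m φ₁ p - Aint n m φ₂ p := by
  rw [Aint, Aint, Aint, ← integral_sub (integ_line m φ₁ p hp) (integ_line m φ₂ p hp)]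
  congr 1
  funext t
  rw [SchwartzMap.sub_apply]
  ring

lemma johnStep (m k : ℕ) (g : (Fin (k + 1) → Fin n) → SchwartzMap (Fin n → ℝ) ℝ)
    (hsym : ∀ (I : Fin (k + 1) → Fin n) (π : Equiv.Perm (Fin (k + 1))), g (I ∘ π) = g I)
    (i j : Fin n) (p : HH n) (hp : p.2 ≠ 0) :
    john n i j (JmomT n (m) (k + 1) (fun I => ⇑(g I))) p =
      ((k : ℝ) + 1) * JmomT n m k
        (fun I' => ⇑(pdS n i (g (Fin.cons j I')) - pdS n j (g (Fin.cons i I')))) p := by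
  rw [john_formula m (k + 1) g i j p hp]
  have hPAQ : ∀ (a : Fin (k + 1)) (I : Fin (k + 1) → Fin n) (φ : SchwartzMap (Fin n → ℝ) ℝ),
      PA n (k + 1) m (Finset.univ.erase a) I φ p =
        (∏ b ∈ Finset.univ.erase a, p.2 (I b)) * Aint n m φ p := fun _ _ _ => rfl
  simp only [hPAQ]
  rw [collapse k p.2 j (fun I => Aint n m (pdS n i (g I)) p)
    (fun I π => congrArg (fun φ => Aint n m (pdS n i φ) p) (hsym I π)),
    collapse k p.2 i (fun I => Aint n m (pdS n j (g I)) p)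
    (fun I π => congrArg (fun φ => Aint n m (pdS n j φ) p) (hsym I π))]
  rw [Jmom_eq m k _ p hp, ← mul_sub]
  congr 1
  rw [← Finset.sum_sub_distrib]
  refine Finset.sum_congr rfl fun I' _ => ?_
  have : PA n k m Finset.univ I' (pdS n i (g (Fin.cons j I')) - pdS n j (g (Fin.cons i I'))) p
      = (∏ c, p.2 (I' c)) * (Aint n m (pdS n i (g (Fin.cons j I'))) p
        - Aint n m (pdS n j (g (Fin.cons i I'))) p) := by
    rw [PA, Aint_sub m _ _ p hp]
    rfl
  rw [this]
  ring

lemma fdv_cmul_congr (c : ℝ) (ψ₁ ψ₂ : HH n → ℝ)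
    (h : ∀ q : HH n, q.2 ≠ 0 → ψ₁ q = c * ψ₂ q) (p : HH n) (hp : p.2 ≠ 0) (v : HH n) :
    fderiv ℝ ψ₁ p v = c * fderiv ℝ ψ₂ p v := by
  rw [fderiv_congr_U ψ₁ (fun q => c * ψ₂ q) h p hp, fderiv_cmul]
  rfl

lemma john_cmul_congr (i j : Fin n) (c : ℝ) (ψ₁ ψ₂ : HH n → ℝ)
    (h : ∀ q : HH n, q.2 ≠ 0 → ψ₁ q = c * ψ₂ q) (p : HH n) (hp : p.2 ≠ 0) :
    john n i j ψ₁ p = c * john n i j ψ₂ p := by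
  have hxi : ∀ (v : Fin n) (q : HH n), q.2 ≠ 0 →
      pdxi n v ψ₁ q = c * pdxi n v ψ₂ q := fun v q hq =>
    fdv_cmul_congr c ψ₁ ψ₂ h q hq _
  have hx : ∀ (u v : Fin n), pdx n u (pdxi n v ψ₁) p = c * pdx n u (pdxi n v ψ₂) p :=
    fun u v => fdv_cmul_congr c (pdxi n v ψ₁) (pdxi n v ψ₂) (hxi v) p hp _
  rw [john, john, hx i j, hx j i]
  ring

lemma fold_congr (L : List (Fin n × Fin n)) (c : ℝ) (ψ₁ ψ₂ : HH n → ℝ)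
    (h : ∀ q : HH n, q.2 ≠ 0 → ψ₁ q = c * ψ₂ q) :
    ∀ p : HH n, p.2 ≠ 0 →
      (L.foldr (fun ij acc => john n ij.1 ij.2 acc) ψ₁) p
        = c * (L.foldr (fun ij acc => john n ij.1 ij.2 acc) ψ₂) p := by
  induction L with
  | nil => exact h
  | cons ij L ih =>
    intro p hp
    exact john_cmul_congr ij.1 ij.2 c _ _ ih p hp

lemma cons_comp_perm {k : ℕ} (v : Fin n) (I' : Fin k → Fin n) (π : Equiv.Perm (Fin k)) :
    Fin.cons v (I' ∘ π) = (Fin.cons v I') ∘ ⇑(Equiv.Perm.decomposeFin.symm (0, π)) := by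
  funext b
  refine Fin.cases ?_ (fun c => ?_) b
  · simp [Equiv.Perm.decomposeFin_symm_apply_zero]
  · simp [Equiv.Perm.decomposeFin_symm_apply_succ]

lemma main (m : ℕ) : ∀ (L : List (Fin n × Fin n)) (k : ℕ)
    (g : (Fin k → Fin n) → SchwartzMap (Fin n → ℝ) ℝ),
    (∀ (I : Fin k → Fin n) (π : Equiv.Perm (Fin k)), g (I ∘ π) = g I) →
    k < L.length → ∀ p : HH n, p.2 ≠ 0 →
      (L.foldr (fun ij acc => john n ij.1 ij.2 acc) (JmomT n m k (fun I => ⇑(g I)))) p = 0 := by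
  intro L
  induction L using List.reverseRecOn with
  | nil => intro k g _ hk; simp at hk
  | append_singleton L ij ih =>
    intro k g hsym hk p hp
    rw [List.foldr_append]
    simp only [List.foldr_cons, List.foldr_nil]
    match k, g, hsym, hk with
    | 0, g, hsym, hk =>
      have h0 : ∀ q : HH n, q.2 ≠ 0 →
          john n ij.1 ij.2 (JmomT n m 0 (fun I => ⇑(g I))) q =
          0 * john n ij.1 ij.2 (JmomT n m 0 (fun I => ⇑(g I))) q := by
        intro q hq
        rw [john_formula m 0 g ij.1 ij.2 q hq]
        simp
      have := fold_congr L 0 _ _ h0 p hp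
      rw [this, zero_mul]
    | k + 1, g, hsym, hk =>
      have hstep := fun (q : HH n) (hq : q.2 ≠ 0) => johnStep m k g hsym ij.1 ij.2 q hq
      set g' := fun I' => pdS n ij.1 (g (Fin.cons ij.2 I')) - pdS n ij.2 (g (Fin.cons ij.1 I'))
        with hg'
      have hsym' : ∀ (I' : Fin k → Fin n) (π : Equiv.Perm (Fin k)), g' (I' ∘ π) = g' I' := by
        intro I' π
        rw [hg']
        simp only
        rw [cons_comp_perm, cons_comp_perm, hsym, hsym]
      have := fold_congr L ((k : ℝ) + 1) _ (JmomT n m k (fun I' => ⇑(g' I'))) hstep p hp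
      rw [this, ih k g' hsym' (by simpa using hk) p hp, mul_zero]

end Stmt6Aux


/-- Lemma 2.4: any `k+1` John operators annihilate `J^{m,k} f` for a rank-`k`
symmetric Schwartz tensor field `f`. -/
theorem stmt6 (n m k : ℕ) (f : (Fin k → Fin n) → SchwartzMap (Fin n → ℝ) ℝ)
    (hsym : ∀ (I : Fin k → Fin n) (π : Equiv.Perm (Fin k)), f (I ∘ π) = f I) :
    ∀ (I J : Fin (k + 1) → Fin n) (x ξ : Fin n → ℝ), ξ ≠ 0 →
      iterJohn n (k + 1) I J (JmomT n m k (fun a => ⇑(f a))) (x, ξ) = 0 := by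
  intro I J x ξ hξ
  have h : iterJohn n (k + 1) I J (JmomT n m k fun a => ⇑(f a)) =
      ((List.finRange (k + 1)).map (fun a => (I a, J a))).foldr
        (fun ij acc => john n ij.1 ij.2 acc) (JmomT n m k fun a => ⇑(f a)) := by
    rw [iterJohn, List.foldr_map]
  rw [h]
  exact Stmt6Aux.main m _ k f hsym (by simp) (x, ξ) hξ
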